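/- Let N ≥ 2, let H : ℝ → Matrix (Fin N) (Fin N) ℂ be continuous with H(t) Hermitian for every t, and let ρ : ℝ → Matrix (Fin N) (Fin N) ℂ be differentiable with derivative ρ'(t) = −i·(H(t)ρ(t) − ρ(t)H(t)) for all t, such that ρ(t) is a density matrix for every t and tr[ρ(0)²] > 1/N. Then for every T ≥ 0 one has tr[ρ(T)²] = tr[ρ(0)²] and the quantum speed limit Θ(ρ(0), ρ(T)) ≤ ∫₀ᵀ √( 2·(Re tr[ρ(t)² H(t)²] − Re tr[(ρ(t) H(t))²]) / (Re tr[ρ(t)²] − 1/N) ) dt. -/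

import Mathlib

open Matrix MeasureTheory ComplexOrder

noncomputable section

attribute [local instance] Matrix.normedAddCommGroup Matrix.normedSpace

namespace QSLAux

variable {N : ℕ}

def entryCLM (i j : Fin N) : Matrix (Fin N) (Fin N) ℂ →L[ℂ] ℂ :=
  LinearMap.toContinuousLinearMap
    { toFun := fun A => A i j, map_add' := fun _ _ => rfl, map_smul' := fun _ _ => rfl }

lemma hasDerivAt_entry {f : ℝ → Matrix (Fin N) (Fin N) ℂ} {f' : Matrix (Fin N) (Fin N) ℂ}
    {t : ℝ} (h : HasDerivAt f f' t) (i j : Fin N) :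
    HasDerivAt (fun s => f s i j) (f' i j) t := by
  have h2 := ((entryCLM (N := N) i j).restrictScalars ℝ).hasFDerivAt.comp_hasDerivAt t h
  exact h2

lemma hasDerivAt_trace_mul {f g : ℝ → Matrix (Fin N) (Fin N) ℂ}
    {f' g' : Matrix (Fin N) (Fin N) ℂ} {t : ℝ}
    (hf : HasDerivAt f f' t) (hg : HasDerivAt g g' t) :
    HasDerivAt (fun s => (f s * g s).trace) ((f' * g t).trace + (f t * g').trace) t := by
  have h : HasDerivAt (fun s => ∑ i : Fin N, ∑ j : Fin N, f s i j * g s j i)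
      (∑ i : Fin N, ∑ j : Fin N, (f' i j * g t j i + f t i j * g' j i)) t := by
    apply HasDerivAt.fun_sum; intro i _; apply HasDerivAt.fun_sum; intro j _
    exact (hasDerivAt_entry hf i j).mul (hasDerivAt_entry hg j i)
  have hfun : (fun s => (f s * g s).trace) = fun s => ∑ i : Fin N, ∑ j : Fin N, f s i j * g s j i := by
    funext s; simp [Matrix.trace, Matrix.diag, Matrix.mul_apply]
  have hval : (f' * g t).trace + (f t * g').trace
      = ∑ i : Fin N, ∑ j : Fin N, (f' i j * g t j i + f t i j * g' j i) := by
    simp [Matrix.trace, Matrix.diag, Matrix.mul_apply, Finset.sum_add_distrib]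
  rw [hfun, hval]
  exact h

def matToEuc : Matrix (Fin N) (Fin N) ℂ →L[ℂ] EuclideanSpace ℂ (Fin N × Fin N) :=
  LinearMap.toContinuousLinearMap
    { toFun := fun A => (WithLp.equiv 2 _).symm (fun p : Fin N × Fin N => A p.1 p.2),
      map_add' := fun _ _ => rfl, map_smul' := fun _ _ => rfl }

lemma matToEuc_apply (A : Matrix (Fin N) (Fin N) ℂ) (p : Fin N × Fin N) :
    (matToEuc A : EuclideanSpace ℂ (Fin N × Fin N)) p = A p.1 p.2 := rfl

lemma inner_matToEuc {A B : Matrix (Fin N) (Fin N) ℂ} (hA : A.IsHermitian) :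
    (inner ℂ (matToEuc A) (matToEuc B) : ℂ) = (A * B).trace := by
  have hc : ∀ i j : Fin N, (starRingEnd ℂ) (A i j) = A j i := fun i j => by
    simpa [Complex.star_def] using hA.apply j i
  rw [PiLp.inner_apply, Matrix.trace]
  simp only [Matrix.diag, Matrix.mul_apply, RCLike.inner_apply', matToEuc_apply, hc]
  rw [Fintype.sum_prod_type, Finset.sum_comm]

lemma norm_matToEuc_sq {A : Matrix (Fin N) (Fin N) ℂ} (hA : A.IsHermitian) :
    ‖(matToEuc A : EuclideanSpace ℂ (Fin N × Fin N))‖ ^ 2 = ((A * A).trace).re := by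
  rw [← inner_self_eq_norm_sq (𝕜 := ℂ), inner_matToEuc hA, RCLike.re_to_complex]



lemma tr_h1 (A B : Matrix (Fin N) (Fin N) ℂ) :
    (A * B * (A * B)).trace = (B * A * (B * A)).trace := by
  rw [Matrix.mul_assoc A B (A * B), Matrix.trace_mul_comm A (B * (A * B))]
  simp only [Matrix.mul_assoc]

lemma tr_h2 (A B : Matrix (Fin N) (Fin N) ℂ) :
    (A * B * (B * A)).trace = (B * B * (A * A)).trace := by
  rw [Matrix.mul_assoc A B (B * A), Matrix.trace_mul_comm A (B * (B * A))]
  simp only [Matrix.mul_assoc]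

lemma tr_h3 (A B : Matrix (Fin N) (Fin N) ℂ) :
    (B * A * (A * B)).trace = (B * B * (A * A)).trace := by
  rw [Matrix.trace_mul_comm (B * A) (A * B)]
  exact tr_h2 A B

lemma trace_comm_sq (A B : Matrix (Fin N) (Fin N) ℂ) :
    ((-Complex.I) • (A * B - B * A) * ((-Complex.I) • (A * B - B * A))).trace
      = ((B * B * (A * A)).trace - (B * A * (B * A)).trace)
        + ((B * B * (A * A)).trace - (B * A * (B * A)).trace) := by
  simp only [smul_mul_assoc, mul_smul_comm, smul_smul, Matrix.trace_smul,
    Matrix.sub_mul, Matrix.mul_sub, Matrix.trace_sub, smul_eq_mul]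
  rw [tr_h1 A B, tr_h2 A B, tr_h3 A B]
  have : (-Complex.I) * (-Complex.I) = -1 := by
    simp [Complex.I_mul_I]
  rw [this]
  ring


end QSLAux


/-- A density matrix: Hermitian (implied by positive semidefiniteness),
positive semidefinite, and of unit trace. -/
def IsDensityMatrix {N : ℕ} (ρ : Matrix (Fin N) (Fin N) ℂ) : Prop :=
  ρ.IsHermitian ∧ ρ.PosSemidef ∧ ρ.trace = 1

/-- The generalized Bloch angle
`Θ(ρ,σ) = arccos((Re tr[ρσ] − 1/N)/(Re tr[ρ²] − 1/N))`. -/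
def Theta {N : ℕ} (ρ σ : Matrix (Fin N) (Fin N) ℂ) : ℝ :=
  Real.arccos (((ρ * σ).trace.re - 1 / N) / ((ρ * ρ).trace.re - 1 / N))

set_option maxHeartbeats 1000000 in
theorem qsl_generalized_bloch_angle (N : ℕ) (hN : 2 ≤ N)
    (H : ℝ → Matrix (Fin N) (Fin N) ℂ) (hHcont : Continuous H)
    (hHherm : ∀ t, (H t).IsHermitian)
    (ρ : ℝ → Matrix (Fin N) (Fin N) ℂ)
    (hderiv : ∀ t, HasDerivAt ρ ((-Complex.I) • (H t * ρ t - ρ t * H t)) t)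
    (hdens : ∀ t, IsDensityMatrix (ρ t))
    (hpur : 1 / (N : ℝ) < (ρ 0 * ρ 0).trace.re)
    (T : ℝ) (hT : 0 ≤ T) :
    (ρ T * ρ T).trace = (ρ 0 * ρ 0).trace ∧
    Theta (ρ 0) (ρ T) ≤ ∫ t in (0:ℝ)..T,
      Real.sqrt (2 * ((ρ t * ρ t * (H t * H t)).trace.re
          - (ρ t * H t * (ρ t * H t)).trace.re) /
        ((ρ t * ρ t).trace.re - 1 / (N : ℝ))) := by
  classical
  have hNC : (N : ℂ) ≠ 0 := Nat.cast_ne_zero.mpr (by omega)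
  have hherm : ∀ t, (ρ t).IsHermitian := fun t => (hdens t).1
  set Dm : ℝ → Matrix (Fin N) (Fin N) ℂ :=
    fun t => (-Complex.I) • (H t * ρ t - ρ t * H t) with hDm
  -- the commutator trace vanishes
  have hzero : ∀ t, (Dm t * ρ t).trace + (ρ t * Dm t).trace = 0 := by
    intro t
    simp only [hDm, smul_mul_assoc, mul_smul_comm, Matrix.sub_mul, Matrix.mul_sub,
      Matrix.trace_smul, Matrix.trace_sub, smul_eq_mul, Matrix.mul_assoc]
    rw [Matrix.trace_mul_comm (H t) (ρ t * ρ t)]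
    simp only [Matrix.mul_assoc]
    ring
  -- Part 1 : purity is conserved
  have hdtr : ∀ t, HasDerivAt (fun s => (ρ s * ρ s).trace) 0 t := by
    intro t
    have h := QSLAux.hasDerivAt_trace_mul (hderiv t) (hderiv t)
    rwa [hzero t] at h
  have hconst : ∀ t, (ρ t * ρ t).trace = (ρ 0 * ρ 0).trace := by
    intro t
    exact is_const_of_deriv_eq_zero (fun s => (hdtr s).differentiableAt)
      (fun s => (hdtr s).deriv) t 0
  refine ⟨hconst T, ?_⟩
  -- notation
  have hcre : ∀ t, (ρ t * ρ t).trace.re = (ρ 0 * ρ 0).trace.re :=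
    fun t => by rw [hconst t]
  set R2 : ℝ := (ρ 0 * ρ 0).trace.re - 1 / (N : ℝ) with hR2def
  have hR2 : (0:ℝ) < R2 := sub_pos.mpr hpur
  set R : ℝ := Real.sqrt R2 with hRdef
  have hRpos : 0 < R := Real.sqrt_pos.mpr hR2
  have hRsq : R ^ 2 = R2 := Real.sq_sqrt hR2.le
  -- continuity facts
  have hρcont : Continuous ρ := by
    rw [continuous_iff_continuousAt]; exact fun t => (hderiv t).continuousAt
  have hDcont : Continuous Dm :=
    ((hHcont.matrix_mul hρcont).sub (hρcont.matrix_mul hHcont)).fun_const_smul _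
  -- the Euclidean picture
  set σm : Matrix (Fin N) (Fin N) ℂ := ((N : ℂ))⁻¹ • 1 with hσm
  have hσherm : σm.IsHermitian := by
    show σmᴴ = σm
    rw [hσm, Matrix.conjTranspose_smul, Matrix.conjTranspose_one]
    congr 1
    simp
  have hχherm : ∀ t, (ρ t - σm).IsHermitian := fun t => (hherm t).sub hσherm
  set χ : ℝ → EuclideanSpace ℂ (Fin N × Fin N) := fun t => QSLAux.matToEuc (ρ t - σm) with hχ
  set y' : ℝ → EuclideanSpace ℂ (Fin N × Fin N) := fun t => QSLAux.matToEuc (Dm t) with hy'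
  have hy'cont : Continuous y' := QSLAux.matToEuc.continuous.comp hDcont
  -- traces against σm
  have htrρ : ∀ t, (ρ t).trace = 1 := fun t => (hdens t).2.2
  have htrσleft : ∀ A : Matrix (Fin N) (Fin N) ℂ, (σm * A).trace = (N : ℂ)⁻¹ * A.trace := by
    intro A; rw [hσm, smul_mul_assoc, one_mul, Matrix.trace_smul, smul_eq_mul]
  have htrσright : ∀ A : Matrix (Fin N) (Fin N) ℂ, (A * σm).trace = (N : ℂ)⁻¹ * A.trace := by
    intro A; rw [hσm, mul_smul_comm, mul_one, Matrix.trace_smul, smul_eq_mul]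
  have htrDm : ∀ t, (Dm t).trace = 0 := by
    intro t
    rw [hDm]
    simp only [Matrix.trace_smul, Matrix.trace_sub, smul_eq_mul]
    rw [Matrix.trace_mul_comm]
    ring
  have htrρDm : ∀ t, (ρ t * Dm t).trace = 0 := by
    intro t
    have h := hzero t
    rw [Matrix.trace_mul_comm (Dm t) (ρ t)] at h
    linear_combination h / 2
  -- inner products
  have hxx : ∀ s t, ((ρ s - σm) * (ρ t - σm)).trace
      = (ρ s * ρ t).trace - ((1 / (N : ℝ) : ℝ) : ℂ) := by
    intro s t
    have htrσ : σm.trace = 1 := by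
      rw [hσm, Matrix.trace_smul, Matrix.trace_one, smul_eq_mul]
      simp only [Fintype.card_fin]
      exact inv_mul_cancel₀ hNC
    simp only [Matrix.sub_mul, Matrix.mul_sub, Matrix.trace_sub]
    rw [htrσleft, htrσleft, htrσright, htrρ s, htrρ t, htrσ]
    push_cast
    field_simp
    ring
  have hinχ : ∀ s t, (inner ℂ (χ s) (χ t) : ℂ).re = (ρ s * ρ t).trace.re - 1 / (N : ℝ) := by
    intro s t
    rw [hχ]
    rw [QSLAux.inner_matToEuc (hχherm s), hxx s t, Complex.sub_re, Complex.ofReal_re]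
  have hχnormsq : ∀ t, ‖χ t‖ ^ 2 = R2 := by
    intro t
    rw [hχ, QSLAux.norm_matToEuc_sq (hχherm t), hxx t t, Complex.sub_re, Complex.ofReal_re,
      hcre t, hR2def]
  have hχnorm : ∀ t, ‖χ t‖ = R := by
    intro t
    rw [hRdef, ← hχnormsq t, Real.sqrt_sq (norm_nonneg _)]
  have hinχD : ∀ t, (inner ℂ (χ t) (y' t) : ℂ) = 0 := by
    intro t
    rw [hχ, hy', QSLAux.inner_matToEuc (hχherm t), Matrix.sub_mul, Matrix.trace_sub,
      htrρDm t, htrσleft, htrDm t]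
    ring
  have hinχ0D : ∀ t, (inner ℂ (χ 0) (y' t) : ℂ) = (ρ 0 * Dm t).trace := by
    intro t
    rw [hχ, hy', QSLAux.inner_matToEuc (hχherm 0), Matrix.sub_mul, Matrix.trace_sub,
      htrσleft, htrDm t]
    ring
  -- scalar functions
  set p : ℝ → ℝ := fun t => (ρ 0 * ρ t).trace.re with hp
  set u : ℝ → ℝ := fun t => (p t - 1 / (N : ℝ)) / R2 with hu
  set p' : ℝ → ℝ := fun t => (ρ 0 * Dm t).trace.re with hp'
  have hu1 : ∀ t, |u t| ≤ 1 := by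
    intro t
    have hcs : |(inner ℂ (χ 0) (χ t) : ℂ).re| ≤ ‖χ 0‖ * ‖χ t‖ := by
      refine le_trans (Complex.abs_re_le_norm _) ?_
      exact norm_inner_le_norm (𝕜 := ℂ) _ _
    rw [hinχ 0 t] at hcs
    rw [hχnorm 0, hχnorm t] at hcs
    have h2 : |u t| = |p t - 1 / (N:ℝ)| / R2 := by
      simp only [hu, abs_div, abs_of_pos hR2]
    rw [h2, div_le_one hR2]
    calc |p t - 1/(N:ℝ)| ≤ R * R := by simpa [hp] using hcs
      _ = R2 := Real.mul_self_sqrt hR2.le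
  have hu0 : u 0 = 1 := by
    have h1 : p 0 - 1 / (N:ℝ) = R2 := by simp only [hp, hR2def]
    simp only [hu, h1]
    exact div_self hR2.ne'
  -- derivative of p and u
  have hpderiv : ∀ t, HasDerivAt p (p' t) t := by
    intro t
    have h := QSLAux.hasDerivAt_trace_mul (hasDerivAt_const t (ρ 0)) (hderiv t)
    rw [Matrix.zero_mul, Matrix.trace_zero, zero_add] at h
    have h2 := Complex.reCLM.hasFDerivAt.comp_hasDerivAt t h
    exact h2
  have huderiv : ∀ t, HasDerivAt u (p' t / R2) t :=
    fun t => ((hpderiv t).sub_const _).div_const _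
  -- the key bound |p' t| ≤ √(R2 (1 - u t ^ 2)) ‖y' t‖
  have hkey : ∀ t, |p' t| ≤ Real.sqrt R2 * Real.sqrt (1 - u t ^ 2) * ‖y' t‖ := by
    intro t
    set w : EuclideanSpace ℂ (Fin N × Fin N) := χ 0 - ((u t : ℝ) : ℂ) • χ t with hw
    have hwnormsq : ‖w‖ ^ 2 = R2 * (1 - u t ^ 2) := by
      rw [hw, @norm_sub_sq ℂ, inner_smul_right, norm_smul]
      simp only [RCLike.re_to_complex, Complex.re_ofReal_mul]
      rw [hinχ 0 t]
      have hpu : (ρ 0 * ρ t).trace.re - 1 / (N : ℝ) = u t * R2 := by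
        simp only [hu, hp]; field_simp
      rw [hpu]
      rw [mul_pow, Complex.norm_real, Real.norm_eq_abs, sq_abs, hχnormsq t, hχnormsq 0]
      ring
    have hwy : (inner ℂ w (y' t) : ℂ).re = p' t := by
      rw [hw, inner_sub_left, inner_smul_left, hinχD t, hinχ0D t]
      simp [hp']
    have hcs : |(inner ℂ w (y' t) : ℂ).re| ≤ ‖w‖ * ‖y' t‖ := by
      refine le_trans (Complex.abs_re_le_norm _) ?_
      exact norm_inner_le_norm (𝕜 := ℂ) _ _
    rw [hwy] at hcs
    have hwn : ‖w‖ = Real.sqrt R2 * Real.sqrt (1 - u t ^ 2) := by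
      rw [← Real.sqrt_mul hR2.le, ← hwnormsq, Real.sqrt_sq (norm_nonneg _)]
    rw [hwn] at hcs
    exact hcs
  -- norm of y' t
  have hDherm : ∀ t, (Dm t).IsHermitian := by
    intro t
    have hX : (H t * ρ t - ρ t * H t)ᴴ = -(H t * ρ t - ρ t * H t) := by
      rw [Matrix.conjTranspose_sub, Matrix.conjTranspose_mul, Matrix.conjTranspose_mul,
        (hherm t).eq, (hHherm t).eq, neg_sub]
    show (Dm t)ᴴ = Dm t
    rw [hDm]
    rw [Matrix.conjTranspose_smul, hX]
    simp only [Complex.star_def, map_neg, Complex.conj_I, neg_neg]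
    rw [smul_neg, ← neg_smul]
  have hy'norm : ∀ t, ‖y' t‖ ^ 2
      = 2 * ((ρ t * ρ t * (H t * H t)).trace.re - (ρ t * H t * (ρ t * H t)).trace.re) := by
    intro t
    rw [hy', QSLAux.norm_matToEuc_sq (hDherm t), hDm, QSLAux.trace_comm_sq (H t) (ρ t)]
    simp only [Complex.add_re, Complex.sub_re]
    ring
  -- pointwise integrand identity
  have hv : ∀ t, Real.sqrt (2 * ((ρ t * ρ t * (H t * H t)).trace.re
      - (ρ t * H t * (ρ t * H t)).trace.re) / ((ρ t * ρ t).trace.re - 1 / (N : ℝ)))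
      = ‖y' t‖ / R := by
    intro t
    rw [hcre t, ← hR2def, ← hy'norm t, ← hRsq, ← div_pow, Real.sqrt_sq (by positivity)]
  -- rewrite the RHS integral
  have hIeq : (∫ t in (0:ℝ)..T, Real.sqrt (2 * ((ρ t * ρ t * (H t * H t)).trace.re
      - (ρ t * H t * (ρ t * H t)).trace.re) / ((ρ t * ρ t).trace.re - 1 / (N : ℝ))))
      = ∫ t in (0:ℝ)..T, ‖y' t‖ / R :=
    intervalIntegral.integral_congr (fun t _ => hv t)
  rw [show Theta (ρ 0) (ρ T) = Real.arccos (u T) from rfl, hIeq]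
  set S : ℝ := ∫ t in (0:ℝ)..T, ‖y' t‖ / R with hS
  -- continuity of u and p'
  have hpcont : Continuous p := by
    have : Continuous fun t => (ρ 0 * ρ t).trace :=
      (continuous_const.matrix_mul hρcont).matrix_trace
    exact Complex.continuous_re.comp this
  have hucont : Continuous u := (hpcont.sub continuous_const).div_const _
  have hp'cont : Continuous p' :=
    Complex.continuous_re.comp ((continuous_const.matrix_mul hDcont).matrix_trace)
  -- main estimate for every l ∈ (0,1)
  have hlam : ∀ l ∈ Set.Ioo (0:ℝ) 1, Real.arccos (l * u T) ≤ Real.arccos l + S := by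
    rintro l ⟨hl0, hl1⟩
    have hlu : ∀ t, |l * u t| < 1 := by
      intro t
      rw [abs_mul, abs_of_pos hl0]
      calc l * |u t| ≤ l * 1 := mul_le_mul_of_nonneg_left (hu1 t) hl0.le
        _ = l := mul_one l
        _ < 1 := hl1
    have hd : ∀ t, (0:ℝ) < 1 - (l * u t) ^ 2 := by
      intro t
      have := hlu t
      nlinarith [abs_nonneg (l * u t), sq_abs (l * u t)]
    set G : ℝ → ℝ := fun t => Real.arccos (l * u t) with hG
    set G' : ℝ → ℝ := fun t => -(1 / Real.sqrt (1 - (l * u t) ^ 2)) * (l * (p' t / R2)) with hG'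
    have hGderiv : ∀ t, HasDerivAt G (G' t) t := by
      intro t
      have h1 : HasDerivAt (fun s => l * u s) (l * (p' t / R2)) t := (huderiv t).const_mul l
      have h2 := (Real.hasDerivAt_arccos (x := l * u t)
        (by intro h; have := hlu t; rw [h] at this; simp at this)
        (by intro h; have := hlu t; rw [h] at this; simp at this)).comp t h1
      exact h2
    -- pointwise bound G' t ≤ ‖y' t‖ / R
    have hptw : ∀ t, G' t ≤ ‖y' t‖ / R := by
      intro t
      have hunn : (0:ℝ) ≤ 1 - u t ^ 2 := by
        have h := abs_le.mp (hu1 t)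
        nlinarith [h.1, h.2]
      have hR2R : R2 = R * R := (Real.mul_self_sqrt hR2.le).symm
      have hstep1 : |p' t / R2| ≤ Real.sqrt (1 - u t ^ 2) * (‖y' t‖ / R) := by
        rw [abs_div, abs_of_pos hR2, div_le_iff₀ hR2]
        calc |p' t| ≤ Real.sqrt R2 * Real.sqrt (1 - u t ^ 2) * ‖y' t‖ := hkey t
          _ = Real.sqrt (1 - u t ^ 2) * (‖y' t‖ / R) * R2 := by
              rw [← hRdef, hR2R]
              field_simp
      have hsqle : l * Real.sqrt (1 - u t ^ 2) ≤ Real.sqrt (1 - (l * u t) ^ 2) := by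
        have h1 : l * Real.sqrt (1 - u t ^ 2) = Real.sqrt (l ^ 2 * (1 - u t ^ 2)) := by
          rw [Real.sqrt_mul (sq_nonneg l), Real.sqrt_sq hl0.le]
        rw [h1]
        apply Real.sqrt_le_sqrt
        nlinarith [hl0.le, hl1.le, sq_nonneg (u t)]
      calc G' t ≤ |G' t| := le_abs_self _
        _ = (1 / Real.sqrt (1 - (l * u t) ^ 2)) * (l * |p' t / R2|) := by
            rw [hG']
            rw [abs_mul, abs_neg, abs_mul]
            rw [abs_of_pos (one_div_pos.mpr (Real.sqrt_pos.mpr (hd t))), abs_of_pos hl0]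
        _ ≤ (1 / Real.sqrt (1 - (l * u t) ^ 2)) * (l * (Real.sqrt (1 - u t ^ 2) * (‖y' t‖ / R))) := by
            apply mul_le_mul_of_nonneg_left _ (by positivity)
            exact mul_le_mul_of_nonneg_left hstep1 hl0.le
        _ = (l * Real.sqrt (1 - u t ^ 2) / Real.sqrt (1 - (l * u t) ^ 2)) * (‖y' t‖ / R) := by
            ring
        _ ≤ 1 * (‖y' t‖ / R) := by
            apply mul_le_mul_of_nonneg_right _ (by positivity)
            rw [div_le_one (Real.sqrt_pos.mpr (hd t))]
            exact hsqle
        _ = ‖y' t‖ / R := one_mul _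
    -- continuity of G'
    have hG'cont : Continuous G' := by
      have h1 : Continuous fun t => 1 - (l * u t) ^ 2 :=
        (continuous_const.sub ((continuous_const.mul hucont).pow 2))
      have h2 : Continuous fun t => Real.sqrt (1 - (l * u t) ^ 2) :=
        Real.continuous_sqrt.comp h1
      have h3 : Continuous fun t => 1 / Real.sqrt (1 - (l * u t) ^ 2) :=
        continuous_const.div h2 (fun t => (Real.sqrt_pos.mpr (hd t)).ne')
      exact (h3.neg.mul (continuous_const.mul (hp'cont.div_const _)))
    -- FTC
    have hFTC : ∫ t in (0:ℝ)..T, G' t = G T - G 0 :=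
      intervalIntegral.integral_eq_sub_of_hasDerivAt (fun t _ => hGderiv t)
        (hG'cont.intervalIntegrable _ _)
    have hmono : ∫ t in (0:ℝ)..T, G' t ≤ S := by
      rw [hS]
      apply intervalIntegral.integral_mono_on hT (hG'cont.intervalIntegrable _ _)
        ((hy'cont.norm.div_const _).intervalIntegrable _ _)
      exact fun t _ => hptw t
    have hG0 : G 0 = Real.arccos l := by rw [hG]; simp [hu0]
    have : G T - G 0 ≤ S := hFTC ▸ hmono
    rw [hG0] at this
    rw [hG] at this
    linarith
  -- take the limit l → 1⁻
  have hlim1 : Filter.Tendsto (fun l : ℝ => Real.arccos (l * u T)) (nhdsWithin 1 (Set.Iio 1))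
      (nhds (Real.arccos (u T))) := by
    have hc : Continuous fun l : ℝ => Real.arccos (l * u T) :=
      Real.continuous_arccos.comp (continuous_id.mul continuous_const)
    have := hc.continuousAt (x := 1)
    rw [ContinuousAt] at this
    simpa using this.mono_left nhdsWithin_le_nhds
  have hlim2 : Filter.Tendsto (fun l : ℝ => Real.arccos l + S) (nhdsWithin 1 (Set.Iio 1))
      (nhds S) := by
    have hc : Continuous fun l : ℝ => Real.arccos l + S :=
      Real.continuous_arccos.add continuous_const
    have := hc.continuousAt (x := 1)
    rw [ContinuousAt] at this
    simp only [Real.arccos_one, zero_add] at this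
    exact this.mono_left nhdsWithin_le_nhds
  refine le_of_tendsto_of_tendsto hlim1 hlim2 ?_
  filter_upwards [Ioo_mem_nhdsLT_of_mem (show (1:ℝ) ∈ Set.Ioc (0:ℝ) 1 by
    constructor <;> norm_num)] with l hl
  exact hlam l hl
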